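/- Let X = (m−1)·(C(s₀,r) − s₀·L) − Σ_{i=1}^m (C(a_i,r) − a_i·L) where L = log_b n, s₀ = (1−ε/2)·((r−1)!·L)^{1/(r−1)}, and each a_i ≥ (1+ε)·((r−1)!·L)^{1/(r−1)}. If m = C·ε^{−2} for a sufficiently large constant C (depending only on r), then for all large n, X ≤ −c·L^{r/(r−1)} for some constant c > 0. -/

import Mathlib

open Filter

lemma aux_pow_lb (x : ℝ) (hx : 0 ≤ x) : ∀ n : ℕ,
    1 + n * x + (n * (n - 1) / 2) * x ^ 2 ≤ (1 + x) ^ n := by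
  intro n
  induction n with
  | zero => norm_num
  | succ k ih =>
      have h1 : (0:ℝ) ≤ 1 + x := by linarith
      have h2 : (1 + k * x + (k * (k - 1) / 2) * x ^ 2) * (1 + x) ≤ (1 + x) ^ (k + 1) := by
        rw [pow_succ]
        exact mul_le_mul_of_nonneg_right ih h1
      rcases Nat.eq_zero_or_pos k with hk | hk
      · subst hk; push_cast; nlinarith
      · have hk1 : (1:ℝ) ≤ (k:ℝ) := by exact_mod_cast hk
        have h3 : 0 ≤ (k:ℝ) * ((k:ℝ) - 1) / 2 * x ^ 2 * x :=
          mul_nonneg (mul_nonneg (div_nonneg (mul_nonneg (by linarith) (by linarith))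
            (by norm_num)) (sq_nonneg x)) hx
        push_cast
        nlinarith [h2, h3]

lemma aux_pow_ub (x : ℝ) (hx : 0 ≤ x) (hx1 : x ≤ 1) : ∀ n : ℕ,
    (1 - x) ^ n ≤ 1 - n * x + (n * (n - 1) / 2) * x ^ 2 := by
  intro n
  induction n with
  | zero => norm_num
  | succ k ih =>
      have h1 : (0:ℝ) ≤ 1 - x := by linarith
      have h2 : (1 - x) ^ (k + 1) ≤ (1 - k * x + (k * (k - 1) / 2) * x ^ 2) * (1 - x) := by
        rw [pow_succ]
        exact mul_le_mul_of_nonneg_right ih h1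
      rcases Nat.eq_zero_or_pos k with hk | hk
      · subst hk; push_cast; nlinarith
      · have hk1 : (1:ℝ) ≤ (k:ℝ) := by exact_mod_cast hk
        have h3 : 0 ≤ (k:ℝ) * ((k:ℝ) - 1) / 2 * x ^ 2 * x :=
          mul_nonneg (mul_nonneg (div_nonneg (mul_nonneg (by linarith) (by linarith))
            (by norm_num)) (sq_nonneg x)) hx
        push_cast
        nlinarith [h2, h3]

lemma aux_pow_sub_pow_le (x y : ℝ) (hy : 0 ≤ y) (hxy : y ≤ x) (n : ℕ) :
    x ^ n - y ^ n ≤ n * x ^ (n - 1) * (x - y) := by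
  have hx : 0 ≤ x := hy.trans hxy
  rw [← geom_sum₂_mul x y n]
  apply mul_le_mul_of_nonneg_right _ (by linarith)
  calc ∑ i ∈ Finset.range n, x ^ i * y ^ (n - 1 - i)
      ≤ ∑ _i ∈ Finset.range n, x ^ (n - 1) := by
        apply Finset.sum_le_sum
        intro i hi
        have hi' : i + (n - 1 - i) = n - 1 := by
          have := Finset.mem_range.1 hi; omega
        calc x ^ i * y ^ (n - 1 - i) ≤ x ^ i * x ^ (n - 1 - i) := by
              exact mul_le_mul_of_nonneg_left (pow_le_pow_left₀ hy hxy _) (pow_nonneg hx i)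
          _ = x ^ (n - 1) := by rw [← pow_add, hi']
    _ = n * x ^ (n - 1) := by simp [Finset.sum_const, mul_comm]

lemma aux_le_pow_sub_pow (x y : ℝ) (hy : 0 ≤ y) (hxy : y ≤ x) (n : ℕ) :
    n * y ^ (n - 1) * (x - y) ≤ x ^ n - y ^ n := by
  have hx : 0 ≤ x := hy.trans hxy
  rw [← geom_sum₂_mul x y n]
  apply mul_le_mul_of_nonneg_right _ (by linarith)
  calc (n : ℝ) * y ^ (n - 1) = ∑ _i ∈ Finset.range n, y ^ (n - 1) := by
        simp [Finset.sum_const, mul_comm]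
    _ ≤ ∑ i ∈ Finset.range n, x ^ i * y ^ (n - 1 - i) := by
        apply Finset.sum_le_sum
        intro i hi
        have hi' : i + (n - 1 - i) = n - 1 := by
          have := Finset.mem_range.1 hi; omega
        calc y ^ (n - 1) = y ^ i * y ^ (n - 1 - i) := by rw [← pow_add, hi']
          _ ≤ x ^ i * y ^ (n - 1 - i) :=
              mul_le_mul_of_nonneg_right (pow_le_pow_left₀ hy hxy _) (pow_nonneg hy _)

open Filter

set_option maxHeartbeats 1000000

/-- Let `L = log_b n`, `s₀ = ⌊(1−ε/2)·((r−1)!·L)^{1/(r−1)}⌋` and `a_i ≥ (1+ε)·((r−1)!·L)^{1/(r−1)}`.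
If `m ≥ C·ε^{−2}` for a sufficiently large constant `C` (depending only on `r`, `p`), then for all
large `n` the exponent `X = (m−1)(C(s₀,r) − s₀L) − Σ_i (C(a_i,r) − a_i L)` satisfies
`X ≤ −c·L^{r/(r−1)}` for some `c > 0`. -/
theorem stmt_11 (p : ℝ) (hp : 0 < p) (hp1 : p < 1) (r : ℕ) (hr : 2 ≤ r) :
    ∃ C > 0, ∃ ε₀ > 0, ∀ ε : ℝ, 0 < ε → ε ≤ ε₀ → ∀ m : ℕ, C / ε ^ 2 ≤ (m : ℝ) →
      ∃ c > 0, ∀ᶠ n : ℕ in atTop,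
        ∀ (s₀ : ℕ) (a : Fin m → ℕ),
          ((1 - ε / 2) *
              (((r - 1).factorial : ℝ) * Real.logb (1 / (1 - p)) n) ^ ((1 : ℝ) / (r - 1)) - 1
            ≤ (s₀ : ℝ)) →
          ((s₀ : ℝ) ≤
            (1 - ε / 2) *
              (((r - 1).factorial : ℝ) * Real.logb (1 / (1 - p)) n) ^ ((1 : ℝ) / (r - 1))) →
          (∀ i : Fin m, (a i : ℝ) ≥
            (1 + ε) *
              (((r - 1).factorial : ℝ) * Real.logb (1 / (1 - p)) n) ^ ((1 : ℝ) / (r - 1))) →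
          ((m : ℝ) - 1) * ((s₀.choose r : ℝ) - (s₀ : ℝ) * Real.logb (1 / (1 - p)) n) -
              ∑ i : Fin m,
                (((a i).choose r : ℝ) - (a i : ℝ) * Real.logb (1 / (1 - p)) n) ≤
            -c * (Real.logb (1 / (1 - p)) n) ^ ((r : ℝ) / (r - 1)) := by
  have hb : 1 < 1 / (1 - p) := one_lt_one_div (by linarith) (by linarith)
  refine ⟨16, by norm_num, 1, by norm_num, ?_⟩
  intro ε hε hε1 m hm
  have hε2 : (0:ℝ) < ε ^ 2 := by positivity
  have hmε : 16 ≤ (m:ℝ) * ε ^ 2 := by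
    rw [div_le_iff₀ hε2] at hm; linarith only [hm]
  have hm16 : (16:ℝ) ≤ (m:ℝ) := by
    have hε21 : ε ^ 2 ≤ 1 := by nlinarith only [hε1, hε.le]
    have h1 : (m:ℝ) * ε ^ 2 ≤ (m:ℝ) * 1 := mul_le_mul_of_nonneg_left hε21 (Nat.cast_nonneg m)
    linarith only [hmε, h1]
  refine ⟨1, by norm_num, ?_⟩
  -- cast facts about r
  have hr1 : 1 ≤ r := by omega
  have hrn : (2:ℝ) ≤ (r:ℝ) := by exact_mod_cast hr
  have hrn1 : (0:ℝ) < (r:ℝ) - 1 := by linarith only [hrn]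
  have hcast : ((r - 1 : ℕ) : ℝ) = (r:ℝ) - 1 := by
    rw [Nat.cast_sub hr1]; norm_num
  have hD0 : (0:ℝ) < ((r-1).factorial : ℝ) := by exact_mod_cast (r-1).factorial_pos
  have hD1 : (1:ℝ) ≤ ((r-1).factorial : ℝ) := by exact_mod_cast (r-1).factorial_pos
  have hq : ((r.factorial : ℝ)) = (r:ℝ) * ((r-1).factorial : ℝ) := by
    have h : r = (r - 1) + 1 := by omega
    rw [h, Nat.factorial_succ]
    push_cast [hcast]
    ring
  have hq0 : (0:ℝ) < (r.factorial : ℝ) := by exact_mod_cast r.factorial_pos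
  -- the constant A and threshold M
  set E : ℝ := (r:ℝ) * 2 ^ (r - 1) with hE
  have hE0 : 0 ≤ E := by positivity
  set A : ℝ := (r:ℝ) / ε + 16 * (1 + E) / (3 * ε ^ 2) + 1 with hA
  have hA1 : 1 ≤ max A 1 := le_max_right _ _
  set M : ℝ := max 1 ((max A 1) ^ (r - 1)) with hM
  clear_value E A M
  have hbt : Tendsto (fun n : ℕ => Real.logb (1 / (1 - p)) n) atTop atTop :=
    (Real.tendsto_logb_atTop hb).comp tendsto_natCast_atTop_atTop
  filter_upwards [hbt.eventually_ge_atTop M] with n hLM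
  intro s₀ a hs₀l hs₀u ha
  set L : ℝ := Real.logb (1 / (1 - p)) n with hLdef
  clear_value L
  have hL1 : 1 ≤ L := le_trans (by rw [hM]; exact le_max_left _ _) hLM
  have hL0 : (0:ℝ) < L := by linarith only [hL1]
  set K : ℝ := (((r - 1).factorial : ℝ) * L) ^ ((1 : ℝ) / ((r:ℝ) - 1)) with hKdef
  clear_value K
  have hKf0 : (0:ℝ) ≤ ((r-1).factorial : ℝ) * L := by positivity
  have hK0 : (0:ℝ) ≤ K := by rw [hKdef]; exact Real.rpow_nonneg hKf0 _
  have hKpow : K ^ (r - 1) = ((r-1).factorial : ℝ) * L := by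
    rw [hKdef, ← Real.rpow_natCast (_ ^ _) (r-1), ← Real.rpow_mul hKf0, hcast]
    rw [one_div, inv_mul_cancel₀ (by intro h; linarith only [hrn, h.ge, h.le] : (r:ℝ) - 1 ≠ 0), Real.rpow_one]
  have hLKf : L ≤ ((r-1).factorial : ℝ) * L := by
    have := mul_le_mul_of_nonneg_right hD1 hL0.le
    linarith only [this]
  -- K is large
  have hKA : max A 1 ≤ K := by
    have h1 : (max A 1) ^ (r - 1) ≤ K ^ (r - 1) := by
      rw [hKpow]
      exact le_trans (by rw [hM]; exact le_max_right _ _) (le_trans hLM hLKf)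
    exact le_of_pow_le_pow_left₀ (by omega) hK0 h1
  have hK1 : (1:ℝ) ≤ K := le_trans hA1 hKA
  have hAK : A ≤ K := le_trans (le_max_left _ _) hKA
  have hAK' : (r:ℝ) / ε + 16 * (1 + E) / (3 * ε ^ 2) + 1 ≤ K := by rw [← hA]; exact hAK
  have hεK : (r:ℝ) ≤ ε * K := by
    have h1 : (r:ℝ) / ε ≤ K := by
      have h2 : (0:ℝ) ≤ 16 * (1 + E) / (3 * ε ^ 2) := by positivity
      linarith only [hAK', h2]
    rw [div_le_iff₀ hε] at h1; linarith only [h1]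
  have hKE : 1 + E ≤ 3 * ε ^ 2 * K / 16 := by
    have h1 : 16 * (1 + E) / (3 * ε ^ 2) ≤ K := by
      have h2 : (0:ℝ) ≤ (r:ℝ) / ε := by positivity
      linarith only [hAK', h2]
    rw [div_le_iff₀ (by positivity)] at h1
    rw [le_div_iff₀ (by norm_num : (0:ℝ) < 16)]
    ring_nf at h1 ⊢
    linarith only [h1]
  set u : ℝ := (1 - ε / 2) * K with hu
  set v : ℝ := (1 + ε) * K with hv
  clear_value u v
  have hu0 : 0 ≤ u := by rw [hu]; exact mul_nonneg (by linarith only [hε1]) hK0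
  have hv0 : 0 ≤ v := by rw [hv]; exact mul_nonneg (by linarith only [hε.le]) hK0
  have hyK : K ≤ v - (r:ℝ) := by rw [hv]; linarith only [hεK]
  have hy0 : 0 ≤ v - (r:ℝ) := by linarith only [hyK, hK0]
  set q : ℝ := (r.factorial : ℝ) with hqdef
  set D : ℝ := ((r-1).factorial : ℝ) with hDdef
  set T : ℝ := K * L with hT
  clear_value q D T
  have hT0 : (0:ℝ) ≤ T := by rw [hT]; positivity
  have hT1 : (1:ℝ) ≤ T := by
    rw [hT]
    have := mul_le_mul hK1 hL1 zero_le_one hK0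
    linarith only [this]
  -- upper bound for the s₀ term
  have hB1 : q * ((s₀.choose r : ℝ) - (s₀ : ℝ) * L) ≤ u ^ r - q * (u - 1) * L := by
    have h1 : (s₀.choose r : ℝ) ≤ (s₀:ℝ) ^ r / q := by
      rw [hqdef]; exact_mod_cast Nat.choose_le_pow_div (α := ℝ) r s₀
    have h2 : (s₀:ℝ) ^ r ≤ u ^ r := pow_le_pow_left₀ (Nat.cast_nonneg _) hs₀u r
    have h3 : q * (s₀.choose r : ℝ) ≤ (s₀:ℝ) ^ r := by
      rw [mul_comm, ← le_div_iff₀ hq0]; exact h1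
    have h4 : q * L * (u - 1) ≤ q * L * (s₀:ℝ) :=
      mul_le_mul_of_nonneg_left hs₀l (by positivity)
    linarith only [h2, h3, h4]
  -- lower bound for each a i term
  have hB2 : ∀ i : Fin m, v ^ r - (r:ℝ)^2 * v ^ (r-1) - q * v * L ≤
      q * (((a i).choose r : ℝ) - (a i : ℝ) * L) := by
    intro i
    have hai : v ≤ (a i : ℝ) := ha i
    have hyx : v - (r:ℝ) ≤ (a i : ℝ) - (r:ℝ) := by linarith only [hai]
    have hx0 : (0:ℝ) ≤ (a i : ℝ) - (r:ℝ) := le_trans hy0 hyx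
    have hrai : r ≤ a i := by
      have h : (r:ℝ) ≤ (a i : ℝ) := by linarith only [hyK, hK0, hai, hK1]
      exact_mod_cast h
    -- q * choose ≥ x^r
    have h5 : (a i : ℝ) - (r:ℝ) ≤ ((a i + 1 - r : ℕ) : ℝ) := by
      rw [Nat.cast_sub (by omega)]; push_cast; linarith only []
    have h6 : ((a i : ℝ) - (r:ℝ)) ^ r ≤ ((a i + 1 - r : ℕ) : ℝ) ^ r := pow_le_pow_left₀ hx0 h5 r
    have h7 : ((a i + 1 - r : ℕ) : ℝ) ^ r / q ≤ ((a i).choose r : ℝ) := by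
      rw [hqdef]; exact_mod_cast Nat.pow_le_choose (α := ℝ) r (a i)
    have h8 : ((a i : ℝ) - (r:ℝ)) ^ r ≤ q * ((a i).choose r : ℝ) := by
      rw [mul_comm, ← div_le_iff₀ hq0]
      exact le_trans (by gcongr) h7
    -- growth from v to a i
    have h9 : (r:ℝ) * (v - (r:ℝ)) ^ (r-1) * (((a i : ℝ) - (r:ℝ)) - (v - (r:ℝ)))
        ≤ ((a i : ℝ) - (r:ℝ)) ^ r - (v - (r:ℝ)) ^ r :=
      aux_le_pow_sub_pow _ (v - (r:ℝ)) hy0 hyx r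
    have h10 : K ^ (r-1) ≤ (v - (r:ℝ)) ^ (r-1) := pow_le_pow_left₀ hK0 hyK _
    rw [hKpow] at h10
    have h11 : q * L * (((a i : ℝ) - (r:ℝ)) - (v - (r:ℝ))) ≤
        (r:ℝ) * (v - (r:ℝ)) ^ (r-1) * (((a i : ℝ) - (r:ℝ)) - (v - (r:ℝ))) := by
      have he : q * L = (r:ℝ) * (D * L) := by rw [hq]; ring
      rw [he]
      apply mul_le_mul_of_nonneg_right _ (by linarith only [hyx])
      exact mul_le_mul_of_nonneg_left h10 (by linarith only [hrn])
    -- loss from v to v - r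
    have h12 : v ^ r - (v - (r:ℝ)) ^ r ≤ (r:ℝ) * v ^ (r-1) * (v - (v - (r:ℝ))) :=
      aux_pow_sub_pow_le v (v - (r:ℝ)) hy0 (by linarith only [hrn]) r
    have h13 : v ^ r - (v - (r:ℝ)) ^ r ≤ (r:ℝ)^2 * v ^ (r-1) := by
      have he : v - (v - (r:ℝ)) = (r:ℝ) := by ring
      rw [he] at h12; linarith only [h12]
    linarith only [h8, h9, h11, h13]
  -- sum over i
  set B₂ : ℝ := v ^ r - (r:ℝ)^2 * v ^ (r-1) - q * v * L with hB₂def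
  clear_value B₂
  have hsum : (m:ℝ) * B₂ ≤ ∑ i : Fin m, q * (((a i).choose r : ℝ) - (a i : ℝ) * L) := by
    calc (m:ℝ) * B₂ = ∑ _i : Fin m, B₂ := by
          rw [Finset.sum_const, Finset.card_univ, Fintype.card_fin, nsmul_eq_mul]
      _ ≤ _ := Finset.sum_le_sum fun i _ => hB2 i
  -- identities in terms of T
  have hKr : K ^ r = D * T := by
    have hstep : r = (r - 1) + 1 := by omega
    rw [hstep, pow_succ, hKpow, hDdef, hT]; ring
  have hKr1 : K ^ (r - 1) = D * L := by rw [hKpow, hDdef]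
  set P1 : ℝ := (1 - ε/2) ^ r with hP1
  set P2 : ℝ := (1 + ε) ^ r with hP2
  set P3 : ℝ := (1 + ε) ^ (r - 1) with hP3
  clear_value P1 P2 P3
  have hur : u ^ r = P1 * (D * T) := by rw [hu, mul_pow, hKr, hP1]
  have hvr : v ^ r = P2 * (D * T) := by rw [hv, mul_pow, hKr, hP2]
  have hvr1 : v ^ (r-1) = P3 * (D * L) := by rw [hv, mul_pow, hKr1, hP3]
  -- gap inequality
  have hgap : P1 - P2 ≤ -(3/2) * (r:ℝ) * ε - (3/8) * (r:ℝ) * ((r:ℝ) - 1) * ε ^ 2 := by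
    have hlb := aux_pow_lb ε (le_of_lt hε) r
    have hub := aux_pow_ub (ε/2) (by linarith only [hε.le]) (by linarith only [hε1]) r
    rw [hP1, hP2]; linarith only [hlb, hub]
  have hP30 : 0 ≤ P3 := by rw [hP3]; exact pow_nonneg (by linarith only [hε.le]) _
  have hP3b : P3 ≤ 2 ^ (r - 1) := by
    rw [hP3]; exact pow_le_pow_left₀ (by linarith only [hε.le]) (by linarith only [hε1]) _
  have hP10 : 0 ≤ P1 := by rw [hP1]; exact pow_nonneg (by linarith only [hε1]) _
  have hP1b : P1 ≤ 1 := by rw [hP1]; exact pow_le_one₀ (by linarith only [hε1]) (by linarith only [hε.le])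
  -- core estimate
  set B₁ : ℝ := u ^ r - q * (u - 1) * L with hB₁def
  clear_value B₁
  have hq' : q = (r:ℝ) * D := hq
  have hB₁eq : B₁ = D * (P1 * T - (r:ℝ) * (1 - ε/2) * T + (r:ℝ) * L) := by
    rw [hB₁def, hur, hq', hu, hT]; ring
  have hB₂eq : B₂ = D * (P2 * T - (r:ℝ)^2 * P3 * L - (r:ℝ) * (1 + ε) * T) := by
    rw [hB₂def, hvr, hvr1, hq', hv, hT]; ring
  set B₁' : ℝ := P1 * T - (r:ℝ) * (1 - ε/2) * T + (r:ℝ) * L with hB₁'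
  set B₂' : ℝ := P2 * T - (r:ℝ)^2 * P3 * L - (r:ℝ) * (1 + ε) * T with hB₂'
  clear_value B₁' B₂'
  have hdiff : B₁' - B₂' ≤ -(3/16) * (r:ℝ) * ε^2 * T := by
    have h1 : (P1 - P2) * T ≤ (-(3/2) * (r:ℝ) * ε - (3/8) * (r:ℝ) * ((r:ℝ) - 1) * ε ^ 2) * T :=
      mul_le_mul_of_nonneg_right hgap hT0
    have h2a : (0:ℝ) ≤ ((r:ℝ) * ((r:ℝ) - 2)) * (ε^2 * T) :=
      mul_nonneg (mul_nonneg (by linarith only [hrn]) (by linarith only [hrn])) (mul_nonneg (sq_nonneg ε) hT0)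
    have h3 : (r:ℝ)^2 * P3 * L ≤ (r:ℝ)^2 * 2 ^ (r-1) * L :=
      mul_le_mul_of_nonneg_right (mul_le_mul_of_nonneg_left hP3b (by positivity)) hL0.le
    have h4 : (r:ℝ) * L + (r:ℝ)^2 * 2 ^ (r-1) * L = (r:ℝ) * ((1 + E) * L) := by
      rw [hE]; ring
    have h5 : (1 + E) * L ≤ 3 * ε ^ 2 * K / 16 * L :=
      mul_le_mul_of_nonneg_right hKE hL0.le
    have h6 : (r:ℝ) * ((1 + E) * L) ≤ (r:ℝ) * (3 * ε ^ 2 * K / 16 * L) :=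
      mul_le_mul_of_nonneg_left h5 (by linarith only [hrn])
    have h7 : (r:ℝ) * (3 * ε ^ 2 * K / 16 * L) = (3/16) * (r:ℝ) * ε^2 * T := by
      rw [hT]; ring
    rw [hB₁', hB₂']
    linarith only [h1, h2a, h3, h4, h6, h7]
  have hmB : (m:ℝ) * (B₁' - B₂') ≤ -3 * (r:ℝ) * T := by
    have h1 : (m:ℝ) * (B₁' - B₂') ≤ (m:ℝ) * (-(3/16) * (r:ℝ) * ε^2 * T) :=
      mul_le_mul_of_nonneg_left hdiff (by positivity)
    have h3 : 16 * ((3/16) * (r:ℝ) * T) ≤ (m:ℝ) * ε^2 * ((3/16) * (r:ℝ) * T) :=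
      mul_le_mul_of_nonneg_right hmε (by positivity)
    linarith only [h1, h3]
  have hcore : ((m:ℝ) - 1) * B₁ - (m:ℝ) * B₂ ≤ -2 * q * T := by
    have hnegB₁' : -B₁' ≤ (r:ℝ) * T := by
      rw [hB₁']
      have e1 : 0 ≤ P1 * T := mul_nonneg hP10 hT0
      have e2 : 0 ≤ (r:ℝ) * L := mul_nonneg (by linarith only [hrn]) hL0.le
      have e3 : 0 ≤ (r:ℝ) * ε * T := mul_nonneg (mul_nonneg (by linarith only [hrn]) hε.le) hT0
      linarith only [e1, e2, e3]
    have heq : ((m:ℝ) - 1) * B₁ - (m:ℝ) * B₂ = D * ((m:ℝ) * (B₁' - B₂') + (- B₁')) := by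
      rw [hB₁eq, hB₂eq]; ring
    have h1 : (m:ℝ) * (B₁' - B₂') + (- B₁') ≤ -2 * (r:ℝ) * T := by linarith only [hmB, hnegB₁']
    calc ((m:ℝ) - 1) * B₁ - (m:ℝ) * B₂ = D * ((m:ℝ) * (B₁' - B₂') + (- B₁')) := heq
      _ ≤ D * (-2 * (r:ℝ) * T) := mul_le_mul_of_nonneg_left h1 hD0.le
      _ = -2 * ((r:ℝ) * D) * T := by ring
      _ = -2 * q * T := by rw [hq']
  -- relate T to L^(r/(r-1))
  have hLe : L ^ ((r:ℝ) / ((r:ℝ) - 1)) ≤ T := by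
    have h1 : L ^ ((1:ℝ) / ((r:ℝ) - 1)) ≤ K := by
      rw [hKdef]
      exact Real.rpow_le_rpow hL0.le hLKf (by positivity)
    have h2 : (r:ℝ) / ((r:ℝ) - 1) = 1 + (1:ℝ) / ((r:ℝ) - 1) := by field_simp; ring
    rw [h2, Real.rpow_add hL0, Real.rpow_one, hT]
    calc L * L ^ ((1:ℝ) / ((r:ℝ) - 1)) ≤ L * K := mul_le_mul_of_nonneg_left h1 hL0.le
      _ = K * L := mul_comm _ _
  -- put everything together
  have hfinal : -2 * q * T ≤ q * (-1 * L ^ ((r:ℝ) / ((r:ℝ) - 1))) := by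
    have h1 : q * (L ^ ((r:ℝ) / ((r:ℝ) - 1))) ≤ q * (2 * T) :=
      mul_le_mul_of_nonneg_left (le_trans hLe (by linarith only [hT0])) hq0.le
    linarith only [h1]
  have hm1 : (0:ℝ) ≤ (m:ℝ) - 1 := by linarith only [hm16]
  have hstep1 : ((m:ℝ) - 1) * (q * ((s₀.choose r : ℝ) - (s₀ : ℝ) * L)) ≤ ((m:ℝ) - 1) * B₁ :=
    mul_le_mul_of_nonneg_left hB1 hm1
  have H : q * (((m : ℝ) - 1) * ((s₀.choose r : ℝ) - (s₀ : ℝ) * L) -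
      ∑ i : Fin m, (((a i).choose r : ℝ) - (a i : ℝ) * L)) ≤
      q * (-1 * L ^ ((r:ℝ) / ((r:ℝ) - 1))) := by
    have hexpand : q * (((m : ℝ) - 1) * ((s₀.choose r : ℝ) - (s₀ : ℝ) * L) -
        ∑ i : Fin m, (((a i).choose r : ℝ) - (a i : ℝ) * L)) =
        ((m:ℝ) - 1) * (q * ((s₀.choose r : ℝ) - (s₀ : ℝ) * L)) -
        ∑ i : Fin m, q * (((a i).choose r : ℝ) - (a i : ℝ) * L) := by
      rw [mul_sub, Finset.mul_sum]; ring
    rw [hexpand]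
    calc ((m:ℝ) - 1) * (q * ((s₀.choose r : ℝ) - (s₀ : ℝ) * L)) -
        ∑ i : Fin m, q * (((a i).choose r : ℝ) - (a i : ℝ) * L)
        ≤ ((m:ℝ) - 1) * B₁ - (m:ℝ) * B₂ := by linarith only [hstep1, hsum]
      _ ≤ -2 * q * T := hcore
      _ ≤ q * (-1 * L ^ ((r:ℝ) / ((r:ℝ) - 1))) := hfinal
  exact le_of_mul_le_mul_left H hq0
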